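/- Let J be an m×n real matrix, F ∈ ℝᵐ, g = JᵀF. For μ > 0 let s(μ) = -(JᵀJ + μI)⁻¹ g. If g ≠ 0, then the map μ ↦ ‖s(μ)‖₂ is strictly monotone decreasing on (0, ∞). -/

import Mathlib

open Matrix

/-- If `g = JᵀF ≠ 0` then `μ ↦ ‖s(μ)‖₂`, with `s(μ) = -(JᵀJ + μI)⁻¹ g`, is
strictly monotone decreasing on `(0, ∞)`. -/
theorem lm_step_norm_strictAntiOn (m n : ℕ) (J : Matrix (Fin m) (Fin n) ℝ)
    (F : Fin m → ℝ) (g : Fin n → ℝ) (hg : g = J.transpose.mulVec F) (hg0 : g ≠ 0)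
    (s : ℝ → Fin n → ℝ)
    (hs : ∀ μ : ℝ, 0 < μ →
      s μ = -((J.transpose * J + μ • (1 : Matrix (Fin n) (Fin n) ℝ))⁻¹.mulVec g)) :
    StrictAntiOn (fun μ : ℝ => Real.sqrt (∑ i, (s μ i) ^ 2)) (Set.Ioi 0) := by
  classical
  set A := J.transpose * J with hA
  -- positive definiteness of A + μ•1
  have hpd : ∀ μ : ℝ, 0 < μ → (A + μ • (1 : Matrix (Fin n) (Fin n) ℝ)).PosDef := by
    intro μ hμ
    refine Matrix.PosDef.posSemidef_add ?_ ?_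
    · have := Matrix.posSemidef_conjTranspose_mul_self J
      simpa [Matrix.conjTranspose_eq_transpose_of_trivial] using this
    · refine Matrix.PosDef.of_dotProduct_mulVec_pos ?_ (fun x hx => ?_)
      · simp [Matrix.IsHermitian, Matrix.conjTranspose_smul,
          Matrix.conjTranspose_eq_transpose_of_trivial]
      · have hx2 : (0:ℝ) < x ⬝ᵥ x := by
          have := Matrix.dotProduct_star_self_pos_iff.mpr hx
          simpa using this
        simp only [Matrix.smul_mulVec, Matrix.one_mulVec, dotProduct_smul]
        have : star x ⬝ᵥ x = x ⬝ᵥ x := by simp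
        rw [this]
        positivity
  have hinv : ∀ μ : ℝ, 0 < μ →
      IsUnit (A + μ • (1 : Matrix (Fin n) (Fin n) ℝ)).det :=
    fun μ h => (hpd μ h).det_pos.ne'.isUnit
  have heq : ∀ μ : ℝ, 0 < μ →
      (A + μ • (1 : Matrix (Fin n) (Fin n) ℝ)) *ᵥ s μ = -g := by
    intro μ h
    rw [hs μ h, Matrix.mulVec_neg, Matrix.mulVec_mulVec,
      Matrix.mul_nonsing_inv _ (hinv μ h), Matrix.one_mulVec]
  -- the key inequality on squared norms
  have key : ∀ a b : ℝ, 0 < a → a < b → (∑ i, (s b i) ^ 2) < ∑ i, (s a i) ^ 2 := by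
    intro a b ha hab
    have hb : 0 < b := ha.trans hab
    set Ba := A + a • (1 : Matrix (Fin n) (Fin n) ℝ) with hBa
    set x := s a with hx
    set y := s b with hy
    set z := Ba⁻¹ *ᵥ y with hzdef
    have hBz : Ba *ᵥ z = y := by
      rw [hzdef, Matrix.mulVec_mulVec, Matrix.mul_nonsing_inv _ (hinv a ha),
        Matrix.one_mulVec]
    have hy0 : y ≠ 0 := by
      intro h
      apply hg0
      have := heq b hb
      rw [← hy, h, Matrix.mulVec_zero] at this
      simpa using this.symm
    have hz0 : z ≠ 0 := by
      intro h
      apply hy0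
      rw [← hBz, h, Matrix.mulVec_zero]
    -- basic equation  A x + a x = A y + b y
    have h1 : A *ᵥ x + a • x = A *ᵥ y + b • y := by
      have h2 := (heq a ha).trans (heq b hb).symm
      simpa [Matrix.add_mulVec, Matrix.smul_mulVec, Matrix.one_mulVec] using h2
    -- x - y = (b - a) • z
    have hxy : Ba *ᵥ (x - y) = (b - a) • y := by
      rw [Matrix.mulVec_sub]
      simp only [hBa, Matrix.add_mulVec, Matrix.smul_mulVec, Matrix.one_mulVec]
      have : A *ᵥ x + a • x - (A *ᵥ y + a • y) = (b - a) • y := by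
        rw [h1]; module
      linear_combination (norm := module) this
    have hxmy : x - y = (b - a) • z := by
      have h3 := congrArg (fun v => Ba⁻¹ *ᵥ v) hxy
      simpa [Matrix.mulVec_mulVec, Matrix.nonsing_inv_mul Ba (hinv a ha),
        Matrix.one_mulVec, Matrix.mulVec_smul, hzdef] using h3
    -- x + y = 2 • (A *ᵥ z) + (a + b) • z
    have hcomm : Ba * A = A * Ba := by
      simp only [hBa, Matrix.add_mul, Matrix.mul_add, Matrix.smul_mul, Matrix.mul_smul,
        Matrix.one_mul, Matrix.mul_one]
    have hBAz : Ba *ᵥ (A *ᵥ z) = A *ᵥ y := by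
      rw [Matrix.mulVec_mulVec, hcomm, ← Matrix.mulVec_mulVec, hBz]
    have hxpy : x + y = (2:ℝ) • (A *ᵥ z) + (a + b) • z := by
      have h4 : Ba *ᵥ (x + y) = Ba *ᵥ ((2:ℝ) • (A *ᵥ z) + (a + b) • z) := by
        simp only [Matrix.mulVec_add, Matrix.mulVec_smul, hBAz, hBz]
        simp only [hBa, Matrix.add_mulVec, Matrix.smul_mulVec, Matrix.one_mulVec]
        have : A *ᵥ x + a • x + (A *ᵥ y + a • y)
            = (A *ᵥ y + b • y) + (A *ᵥ y + a • y) := by rw [h1]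
        linear_combination (norm := module) this
      have h5 := congrArg (fun v => Ba⁻¹ *ᵥ v) h4
      simpa [Matrix.mulVec_mulVec, Matrix.nonsing_inv_mul Ba (hinv a ha),
        Matrix.one_mulVec] using h5
    -- convert sums to dot products
    have hsum : ∀ v : Fin n → ℝ, (∑ i, (v i) ^ 2) = v ⬝ᵥ v := by
      intro v; simp [dotProduct, sq]
    rw [hsum, hsum, ← sub_pos]
    have hdiff : x ⬝ᵥ x - y ⬝ᵥ y = (x - y) ⬝ᵥ (x + y) := by
      simp only [sub_dotProduct, dotProduct_add]
      have : x ⬝ᵥ y = y ⬝ᵥ x := dotProduct_comm x y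
      ring_nf
      rw [dotProduct_comm y x]
      ring
    rw [hdiff, hxmy, hxpy]
    have hJz : z ⬝ᵥ (A *ᵥ z) = (J *ᵥ z) ⬝ᵥ (J *ᵥ z) := by
      rw [hA, ← Matrix.mulVec_mulVec, Matrix.dotProduct_mulVec, Matrix.vecMul_transpose]
    have hz2 : (0:ℝ) < z ⬝ᵥ z := by
      have := Matrix.dotProduct_star_self_pos_iff.mpr hz0
      simpa using this
    have hJz2 : (0:ℝ) ≤ (J *ᵥ z) ⬝ᵥ (J *ᵥ z) := Finset.sum_nonneg fun i _ => mul_self_nonneg _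
    rw [smul_dotProduct, dotProduct_add, dotProduct_smul,
      dotProduct_smul, hJz]
    have hba : (0:ℝ) < b - a := sub_pos.mpr hab
    have hab' : (0:ℝ) < a + b := by linarith
    simp only [smul_eq_mul]
    have : (0:ℝ) < 2 * ((J *ᵥ z) ⬝ᵥ (J *ᵥ z)) + (a + b) * (z ⬝ᵥ z) := by positivity
    positivity
  intro a ha b hb hab
  simp only [Set.mem_Ioi] at ha hb
  exact Real.sqrt_lt_sqrt (by positivity) (key a b ha hab)
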